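/- Let n ≥ 3. The space of linear maps φ from the symmetric matrices {S ∈ Matₙ(ℂ) : Sᵀ = S} to the traceless matrices sl(n,ℂ) = {A ∈ Matₙ(ℂ) : tr A = 0} satisfying φ(X)Y + Y·φ(X)ᵀ = −(φ(Y)X + X·φ(Y)ᵀ) for all symmetric X, Y has complex dimension n(n−1)/2. (That is, the first skew-prolongation of sl(n,ℂ) acting on ⊙²ℂⁿ is isomorphic to Λ²(ℂⁿ)*.) -/

import Mathlib

open Matrix

/-- The space `⊙²ℂⁿ` of symmetric `n × n` complex matrices. -/
noncomputable def symMat (n : ℕ) : Submodule ℂ (Matrix (Fin n) (Fin n) ℂ) where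
  carrier := {S | Sᵀ = S}
  add_mem' := by
    intro a b ha hb
    simp only [Set.mem_setOf_eq] at *
    rw [Matrix.transpose_add, ha, hb]
  zero_mem' := by
    simp only [Set.mem_setOf_eq, Matrix.transpose_zero]
  smul_mem' := by
    intro c a ha
    simp only [Set.mem_setOf_eq] at *
    rw [Matrix.transpose_smul, ha]

/-- The first skew-prolongation of `sl(n,ℂ)` acting on `⊙²ℂⁿ` (symmetric matrices,
`A·S = AS + SAᵀ`): linear maps `φ` from symmetric matrices to traceless matrices with
`φ(X)·Y = −φ(Y)·X`. -/
noncomputable def slSymProlong (n : ℕ) :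
    Submodule ℂ (symMat n →ₗ[ℂ] Matrix (Fin n) (Fin n) ℂ) where
  carrier := {φ | (∀ X : symMat n, (φ X).trace = 0) ∧
    ∀ X Y : symMat n,
      φ X * (Y : Matrix (Fin n) (Fin n) ℂ) + (Y : Matrix (Fin n) (Fin n) ℂ) * (φ X)ᵀ
        = -(φ Y * (X : Matrix (Fin n) (Fin n) ℂ) + (X : Matrix (Fin n) (Fin n) ℂ) * (φ Y)ᵀ)}
  add_mem' := by
    rintro a b ⟨ha1, ha2⟩ ⟨hb1, hb2⟩
    refine ⟨fun X => ?_, fun X Y => ?_⟩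
    · simp [ha1 X, hb1 X]
    · have h1 := ha2 X Y
      have h2 := hb2 X Y
      simp only [LinearMap.add_apply, Matrix.transpose_add, Matrix.add_mul, Matrix.mul_add]
      linear_combination (norm := abel) h1 + h2
  zero_mem' := by
    refine ⟨fun X => ?_, fun X Y => ?_⟩ <;> simp
  smul_mem' := by
    rintro c a ⟨ha1, ha2⟩
    refine ⟨fun X => ?_, fun X Y => ?_⟩
    · simp [ha1 X]
    · have h1 := ha2 X Y
      simp only [LinearMap.smul_apply, Matrix.transpose_smul, Matrix.smul_mul, Matrix.mul_smul]
      rw [← smul_add, h1, smul_neg, smul_add]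
namespace Stmt12Aux

abbrev Mat (n : ℕ) := Matrix (Fin n) (Fin n) ℂ

lemma eq_zero_of_eq_neg {M : Type*} [AddCommGroup M] [Module ℂ M] {a : M} (h : a = -a) : a = 0 := by
  have h2 : a + a = 0 := by nth_rewrite 2 [h]; exact add_neg_cancel a
  have h3 : (2 : ℂ) • a = 0 := by rw [two_smul]; exact h2
  rcases smul_eq_zero.mp h3 with h | h
  · exact absurd h two_ne_zero
  · exact h

lemma neg_of_add_eq_zero {M : Type*} [AddCommGroup M] {a b : M} (h : a + b = 0) : b = -a := by
  rw [eq_neg_iff_add_eq_zero, add_comm]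
  exact h

/-- antisymmetric matrices -/
noncomputable def asym (n : ℕ) : Submodule ℂ (Mat n) where
  carrier := {W | Wᵀ = -W}
  add_mem' := by
    intro a b ha hb
    simp only [Set.mem_setOf_eq] at *
    rw [Matrix.transpose_add, ha, hb, neg_add]
  zero_mem' := by simp
  smul_mem' := by
    intro c a ha
    simp only [Set.mem_setOf_eq] at *
    rw [Matrix.transpose_smul, ha, smul_neg]

/-- the map `X ↦ X * W`. -/
noncomputable def phiW (n : ℕ) (W : Mat n) : symMat n →ₗ[ℂ] Mat n where
  toFun X := (X : Mat n) * W
  map_add' X Y := by simp [add_mul]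
  map_smul' c X := by simp [smul_mul_assoc]

lemma phiW_mem (n : ℕ) (W : Mat n) (hW : Wᵀ = -W) : phiW n W ∈ slSymProlong n := by
  constructor
  · intro X
    have hX : (X : Mat n)ᵀ = X := X.2
    have h1 : ((X : Mat n) * W).trace = -(((X : Mat n) * W).trace) := by
      conv_lhs => rw [← Matrix.trace_transpose, Matrix.transpose_mul, hW, hX]
      rw [Matrix.neg_mul, Matrix.trace_neg, Matrix.trace_mul_comm]
    exact eq_zero_of_eq_neg h1
  · intro X Y
    have hX : (X : Mat n)ᵀ = X := X.2
    have hY : (Y : Mat n)ᵀ = Y := Y.2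
    show (X : Mat n) * W * Y + (Y : Mat n) * ((X : Mat n) * W)ᵀ
        = -((Y : Mat n) * W * X + (X : Mat n) * ((Y : Mat n) * W)ᵀ)
    rw [Matrix.transpose_mul, Matrix.transpose_mul, hW, hX, hY]
    noncomm_ring

/-- the linear map from antisymmetric matrices into the prolongation -/
noncomputable def L (n : ℕ) : asym n →ₗ[ℂ] slSymProlong n where
  toFun W := ⟨phiW n W.1, phiW_mem n W.1 W.2⟩
  map_add' W V := by
    apply Subtype.ext
    apply LinearMap.ext
    intro X
    simp [phiW, mul_add]
  map_smul' c W := by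
    apply Subtype.ext
    apply LinearMap.ext
    intro X
    simp [phiW, mul_smul_comm]

lemma one_mem_sym (n : ℕ) : (1 : Mat n) ∈ symMat n := Matrix.transpose_one

lemma L_inj (n : ℕ) : Function.Injective (L n) := by
  intro W V h
  apply Subtype.ext
  have h2 := congrArg (fun f : slSymProlong n => (f : symMat n →ₗ[ℂ] Mat n) ⟨1, one_mem_sym n⟩) h
  simpa [L, phiW] using h2

lemma L_surj (n : ℕ) : Function.Surjective (L n) := by
  rintro ⟨φ, hφ⟩
  -- the candidate antisymmetric matrix
  set I1 : symMat n := ⟨1, one_mem_sym n⟩ with hI1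
  set W : Mat n := φ I1 with hWdef
  have hrel := hφ.2
  -- φ X * X + X * (φ X)ᵀ = 0
  have selfrel : ∀ X : symMat n, φ X * (X : Mat n) + (X : Mat n) * (φ X)ᵀ = 0 :=
    fun X => eq_zero_of_eq_neg (hrel X X)
  have hW : Wᵀ = -W := by
    have h := selfrel I1
    simp only [hI1, Submodule.coe_mk, mul_one, one_mul] at h
    exact neg_of_add_eq_zero h
  -- ψ := φ - phiW W ∈ slSymProlong, and we show ψ = 0
  set ψ : symMat n →ₗ[ℂ] Mat n := φ - phiW n W with hψdef
  have hψmem : ψ ∈ slSymProlong n := sub_mem hφ (phiW_mem n W hW)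
  have hψrel := hψmem.2
  have hψone : ψ I1 = 0 := by
    simp only [hψdef, LinearMap.sub_apply, phiW, LinearMap.coe_mk, AddHom.coe_mk, hI1,
      Submodule.coe_mk, one_mul]
    exact sub_eq_zero_of_eq rfl
  -- ψ X is antisymmetric
  have hasym : ∀ X : symMat n, (ψ X)ᵀ = -ψ X := by
    intro X
    have h := hψrel X I1
    rw [hψone] at h
    simp only [hI1, Submodule.coe_mk, mul_one, one_mul, hψone, zero_mul, mul_zero,
      Matrix.transpose_zero, add_zero, neg_zero] at h
    exact neg_of_add_eq_zero h
  -- commutator form of the relation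
  have comm : ∀ X Y : symMat n,
      ψ X * (Y : Mat n) - (Y : Mat n) * ψ X = -(ψ Y * (X : Mat n) - (X : Mat n) * ψ Y) := by
    intro X Y
    have h := hψrel X Y
    rw [hasym X, hasym Y] at h
    simpa [mul_neg, sub_eq_add_neg] using h
  have selfcomm : ∀ X : symMat n, ψ X * (X : Mat n) - (X : Mat n) * ψ X = 0 :=
    fun X => eq_zero_of_eq_neg (comm X X)
  -- the symmetric diagonal matrix units
  have hDmem : ∀ i : Fin n, single i i (1:ℂ) ∈ symMat n := by
    intro i
    show (single i i (1:ℂ))ᵀ = single i i 1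
    ext a b
    simp [Matrix.transpose_apply, Matrix.single, and_comm]
  set D : Fin n → symMat n := fun i => ⟨single i i 1, hDmem i⟩ with hDdef
  -- diagonal entries of ψ X vanish
  have hdiag : ∀ (X : symMat n) (k : Fin n), ψ X k k = 0 := by
    intro X k
    have h := congrFun (congrFun (hasym X) k) k
    simp only [Matrix.transpose_apply, Matrix.neg_apply] at h
    exact eq_zero_of_eq_neg h
  -- ψ vanishes on the diagonal matrix units
  have hDzero : ∀ i : Fin n, ψ (D i) = 0 := by
    intro i
    -- column i entries vanish off the diagonal
    have hcol : ∀ k : Fin n, k ≠ i → ψ (D i) k i = 0 := by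
      intro k hk
      have h := congrFun (congrFun (selfcomm (D i)) k) i
      simp only [hDdef, Submodule.coe_mk, Matrix.sub_apply, Matrix.zero_apply,
        Matrix.mul_single_apply_same, Matrix.single_mul_apply_of_ne _ _ _ _ _ hk,
        mul_one, sub_zero] at h
      exact h
    ext k l
    simp only [Matrix.zero_apply]
    rcases eq_or_ne k l with rfl | hkl
    · exact hdiag (D i) k
    rcases eq_or_ne l i with rfl | hli
    · exact hcol k hkl
    rcases eq_or_ne k i with hki | hki
    · -- use antisymmetry: ψ(D i) i l = -ψ(D i) l i = 0
      subst hki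
      have h := congrFun (congrFun (hasym (D k)) k) l
      simp only [Matrix.transpose_apply, Matrix.neg_apply] at h
      rw [hcol l hli] at h
      exact neg_eq_zero.mp h.symm
    · -- generic entry: use the relation between D i and D l
      have h := congrFun (congrFun (comm (D i) (D l)) k) l
      simp only [hDdef, Submodule.coe_mk, Matrix.sub_apply, Matrix.neg_apply,
        Matrix.mul_single_apply_same,
        Matrix.single_mul_apply_of_ne _ _ _ _ _ hkl,
        Matrix.mul_single_apply_of_ne _ _ _ _ _ hli,
        Matrix.single_mul_apply_of_ne _ _ _ _ _ hki,
        mul_one, sub_zero, zero_sub, neg_neg, neg_zero] at h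
      simpa using h
  -- ψ vanishes everywhere
  have hψzero : ∀ X : symMat n, ψ X = 0 := by
    intro X
    ext k l
    simp only [Matrix.zero_apply]
    rcases eq_or_ne k l with rfl | hkl
    · exact hdiag X k
    · have h := congrFun (congrFun (comm X (D l)) k) l
      rw [hDzero l] at h
      simp only [hDdef, hDzero l, Submodule.coe_mk, Matrix.sub_apply, Matrix.neg_apply,
        Matrix.mul_single_apply_same,
        Matrix.single_mul_apply_of_ne _ _ _ _ _ hkl,
        Matrix.zero_mul, Matrix.mul_zero, Matrix.zero_apply,
        mul_one, sub_zero, sub_self, neg_zero] at h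
      exact h
  refine ⟨⟨W, hW⟩, Subtype.ext ?_⟩
  show phiW n W = φ
  apply LinearMap.ext
  intro X
  have h := hψzero X
  simp only [hψdef, LinearMap.sub_apply] at h
  exact (sub_eq_zero.mp h).symm

/-- index type for strictly upper-triangular entries -/
abbrev Idx (n : ℕ) := Σ j : Fin n, Fin (j : ℕ)

/-- the linear map reading off strictly upper-triangular entries -/
noncomputable def T (n : ℕ) : asym n →ₗ[ℂ] (Idx n → ℂ) where
  toFun W := fun s => (W : Mat n) ⟨(s.2 : ℕ), lt_trans s.2.isLt s.1.isLt⟩ s.1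
  map_add' W V := rfl
  map_smul' c W := rfl

lemma T_inj (n : ℕ) : Function.Injective (T n) := by
  rw [injective_iff_map_eq_zero]
  intro W hW
  have hup : ∀ (k l : Fin n), (k : ℕ) < (l : ℕ) → (W : Mat n) k l = 0 := by
    intro k l hkl
    have h := congrFun hW ⟨l, ⟨(k : ℕ), hkl⟩⟩
    exact h
  have hA : (W : Mat n)ᵀ = -(W : Mat n) := W.2
  apply Subtype.ext
  ext k l
  simp only [Submodule.coe_zero, Matrix.zero_apply]
  rcases lt_trichotomy (k : ℕ) (l : ℕ) with h | h | h
  · exact hup k l h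
  · have hkl : k = l := Fin.ext h
    subst hkl
    have h2 := congrFun (congrFun hA k) k
    simp only [Matrix.transpose_apply, Matrix.neg_apply] at h2
    exact eq_zero_of_eq_neg h2
  · have h2 := congrFun (congrFun hA l) k
    simp only [Matrix.transpose_apply, Matrix.neg_apply] at h2
    rw [h2, hup l k h, neg_zero]

lemma T_surj (n : ℕ) : Function.Surjective (T n) := by
  intro f
  set Wm : Mat n := Matrix.of fun a b =>
    if h : (a : ℕ) < (b : ℕ) then f ⟨b, ⟨(a : ℕ), h⟩⟩
    else if h : (b : ℕ) < (a : ℕ) then -f ⟨a, ⟨(b : ℕ), h⟩⟩ else 0 with hWm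
  have hWmem : Wm ∈ asym n := by
    show Wmᵀ = -Wm
    ext a b
    simp only [Matrix.transpose_apply, Matrix.neg_apply, hWm, Matrix.of_apply]
    rcases lt_trichotomy (a : ℕ) (b : ℕ) with h | h | h
    · rw [dif_neg (by omega), dif_pos h, dif_pos h]
    · rw [dif_neg (by omega), dif_neg (by omega), dif_neg (by omega), dif_neg (by omega),
        neg_zero]
    · rw [dif_pos h, dif_neg (by omega), dif_pos h, neg_neg]
  refine ⟨⟨Wm, hWmem⟩, ?_⟩
  funext s
  obtain ⟨j, i⟩ := s
  show Wm ⟨(i : ℕ), _⟩ j = f ⟨j, i⟩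
  simp only [hWm, Matrix.of_apply]
  rw [dif_pos i.isLt]

theorem main (n : ℕ) : Module.finrank ℂ (slSymProlong n) = n * (n - 1) / 2 := by
  have e1 : asym n ≃ₗ[ℂ] slSymProlong n :=
    LinearEquiv.ofBijective (L n) ⟨L_inj n, L_surj n⟩
  have e2 : asym n ≃ₗ[ℂ] (Idx n → ℂ) :=
    LinearEquiv.ofBijective (T n) ⟨T_inj n, T_surj n⟩
  rw [← e1.finrank_eq, e2.finrank_eq, Module.finrank_pi, Fintype.card_sigma]
  simp only [Fintype.card_fin]
  rw [Fin.sum_univ_eq_sum_range (fun i => i) n]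
  exact Finset.sum_range_id n

end Stmt12Aux

/-- for `n ≥ 3`, the first skew-prolongation of `sl(n,ℂ)` acting on
`⊙²ℂⁿ` has complex dimension `n(n−1)/2` (i.e. it is isomorphic to `Λ²(ℂⁿ)*`). -/
theorem stmt12 (n : ℕ) (hn : 3 ≤ n) :
    Module.finrank ℂ (slSymProlong n) = n * (n - 1) / 2 :=
  Stmt12Aux.main n
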